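/- The Heawood graph has exactly 28 cycles of length 6. -/

import Mathlib

/-- A directed `g`-cycle of a simple graph `G`: an injective map `c : ZMod g → V`
with `c i` adjacent to `c (i+1)` for all `i`. -/
def IsDirCycleOn {V : Type*} (G : SimpleGraph V) (g : ℕ) (c : ZMod g → V) : Prop :=
  Function.Injective c ∧ ∀ i : ZMod g, G.Adj (c i) (c (i + 1))

/-- A sequence of `k` distinct vertices with consecutive vertices adjacent. -/
def IsPathSeq {V : Type*} (G : SimpleGraph V) (k : ℕ) (v : Fin k → V) : Prop :=
  Function.Injective v ∧ ∀ (j : ℕ) (h : j + 1 < k),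
    G.Adj (v ⟨j, Nat.lt_of_succ_lt h⟩) (v ⟨j + 1, h⟩)

/-- A coherent `g`-cycle orientation of level `k` of `G`: a set `D` of directed
`g`-cycles of `G` containing, for every `g`-cycle of `G`, exactly one of its two
directions (one representative up to rotation), and such that every sequence of `k`
distinct vertices `v 0, …, v (k-1)` with consecutive vertices adjacent occurs as a
consecutive segment `(c i, c (i+1), …, c (i+k-1))` of exactly one `c ∈ D`. -/
def IsCoherentOrientation {V : Type*} (G : SimpleGraph V) (g k : ℕ)
    (D : Set (ZMod g → V)) : Prop :=
  (∀ c ∈ D, IsDirCycleOn G g c) ∧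
  (∀ c : ZMod g → V, IsDirCycleOn G g c →
    ∃! c', c' ∈ D ∧
      ((∃ r : ZMod g, ∀ i, c' i = c (i + r)) ∨ (∃ r : ZMod g, ∀ i, c' i = c (r - i)))) ∧
  (∀ v : Fin k → V, IsPathSeq G k v →
    ∃! c, c ∈ D ∧ ∃ i : ZMod g, ∀ j : Fin k, c (i + ((j : ℕ) : ZMod g)) = v j)

/-- Two directed `g`-cycles are related iff one is a rotation of the other or a
rotation of the reversal of the other; the quotient by this relation is the set of
(undirected) `g`-cycles of `G`. -/
def DirCycleRel {V : Type*} (G : SimpleGraph V) (g : ℕ)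
    (c c' : {c : ZMod g → V // IsDirCycleOn G g c}) : Prop :=
  (∃ r : ZMod g, ∀ i, c'.1 i = c.1 (i + r)) ∨ (∃ r : ZMod g, ∀ i, c'.1 i = c.1 (r - i))

/-- The Heawood graph: vertex set `ZMod 14`, `i` adjacent to `i+1`, together with the
extra edges `{2x, 2x+5}` for every `x`. -/
def heawoodGraph : SimpleGraph (ZMod 14) :=
  SimpleGraph.fromRel (fun i j =>
    j = i + 1 ∨ ∃ x : ZMod 14, i = 2 * x ∧ j = 2 * x + 5)

instance heawoodAdjDec : DecidableRel heawoodGraph.Adj := fun a b =>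
  decidable_of_iff (a ≠ b ∧
      ((b = a + 1 ∨ ∃ x : ZMod 14, a = 2 * x ∧ b = 2 * x + 5) ∨
       (a = b + 1 ∨ ∃ x : ZMod 14, b = 2 * x ∧ a = 2 * x + 5)))
    (by rw [heawoodGraph, SimpleGraph.fromRel_adj])

def repsF : Fin 28 → ZMod 6 → ZMod 14 :=
  ![![0, 1, 2, 3, 4, 5],
    ![0, 1, 2, 3, 12, 13],
    ![0, 1, 2, 7, 6, 5],
    ![0, 1, 2, 7, 8, 13],
    ![0, 1, 10, 9, 4, 5],
    ![0, 1, 10, 9, 8, 13],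
    ![0, 1, 10, 11, 6, 5],
    ![0, 1, 10, 11, 12, 13],
    ![0, 5, 4, 3, 12, 13],
    ![0, 5, 4, 9, 8, 13],
    ![0, 5, 6, 7, 8, 13],
    ![0, 5, 6, 11, 12, 13],
    ![1, 2, 3, 4, 9, 10],
    ![1, 2, 3, 12, 11, 10],
    ![1, 2, 7, 6, 11, 10],
    ![1, 2, 7, 8, 9, 10],
    ![2, 3, 4, 5, 6, 7],
    ![2, 3, 4, 9, 8, 7],
    ![2, 3, 12, 11, 6, 7],
    ![2, 3, 12, 13, 8, 7],
    ![3, 4, 5, 6, 11, 12],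
    ![3, 4, 9, 8, 13, 12],
    ![3, 4, 9, 10, 11, 12],
    ![4, 5, 6, 7, 8, 9],
    ![4, 5, 6, 11, 10, 9],
    ![6, 7, 8, 9, 10, 11],
    ![6, 7, 8, 13, 12, 11],
    ![8, 9, 10, 11, 12, 13]]


instance instDirCycleDec (c : ZMod 6 → ZMod 14) : Decidable (IsDirCycleOn heawoodGraph 6 c) :=
  inferInstanceAs (Decidable (Function.Injective c ∧ ∀ i : ZMod 6, heawoodGraph.Adj (c i) (c (i + 1))))

lemma hreps : ∀ k : Fin 28, IsDirCycleOn heawoodGraph 6 (repsF k) := by decide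

lemma dirCycleRel_equiv {V : Type*} (G : SimpleGraph V) (g : ℕ) :
    Equivalence (DirCycleRel G g) := by
  constructor
  · intro a; exact Or.inl ⟨0, fun i => by rw [add_zero]⟩
  · rintro a b (⟨t, h⟩ | ⟨t, h⟩)
    · exact Or.inl ⟨-t, fun i => by rw [h (i + -t)]; exact congrArg _ (by ring)⟩
    · exact Or.inr ⟨t, fun i => by rw [h (t - i)]; exact congrArg _ (by ring)⟩
  · rintro a b c (⟨t1, h1⟩ | ⟨t1, h1⟩) (⟨t2, h2⟩ | ⟨t2, h2⟩)
    · exact Or.inl ⟨t2 + t1, fun i => by rw [h2 i, h1 (i + t2)]; exact congrArg a.1 (by ring)⟩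
    · exact Or.inr ⟨t2 + t1, fun i => by rw [h2 i, h1 (t2 - i)]; exact congrArg a.1 (by ring)⟩
    · exact Or.inr ⟨t1 - t2, fun i => by rw [h2 i, h1 (i + t2)]; exact congrArg a.1 (by ring)⟩
    · exact Or.inl ⟨t1 - t2, fun i => by rw [h2 i, h1 (t2 - i)]; exact congrArg a.1 (by ring)⟩

def adj' (a b : ZMod 14) : Prop :=
  b = a + 1 ∨ a = b + 1 ∨ (a.val % 2 = 0 ∧ b = a + 5) ∨ (b.val % 2 = 0 ∧ a = b + 5)

instance (a b : ZMod 14) : Decidable (adj' a b) :=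
  inferInstanceAs (Decidable (_ ∨ _ ∨ _ ∨ _))

set_option maxHeartbeats 1000000 in
lemma adj_iff : ∀ a b : ZMod 14, heawoodGraph.Adj a b ↔ adj' a b := by decide +kernel

structure Ent where
  a0 : ZMod 14
  a1 : ZMod 14
  a2 : ZMod 14
  a3 : ZMod 14
  a4 : ZMod 14
  a5 : ZMod 14
  k : Fin 28

def Ent.vec (e : Ent) : ZMod 6 → ZMod 14 := ![e.a0, e.a1, e.a2, e.a3, e.a4, e.a5]

def entriesA0 : List Ent := [⟨0, 1, 2, 3, 4, 5, 0⟩, ⟨0, 1, 2, 3, 12, 13, 1⟩, ⟨0, 1, 2, 7, 6, 5, 2⟩, ⟨0, 1, 2, 7, 8, 13, 3⟩, ⟨0, 1, 10, 9, 4, 5, 4⟩, ⟨0, 1, 10, 9, 8, 13, 5⟩, ⟨0, 1, 10, 11, 6, 5, 6⟩, ⟨0, 1, 10, 11, 12, 13, 7⟩, ⟨0, 5, 4, 3, 2, 1, 0⟩, ⟨0, 5, 4, 3, 12, 13, 8⟩, ⟨0, 5, 4, 9, 8, 13, 9⟩, ⟨0, 5, 4, 9, 10, 1, 4⟩, ⟨0,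 5, 6, 7, 2, 1, 2⟩, ⟨0, 5, 6, 7, 8, 13, 10⟩, ⟨0, 5, 6, 11, 10, 1, 6⟩, ⟨0, 5, 6, 11, 12, 13, 11⟩, ⟨0, 13, 8, 7, 2, 1, 3⟩, ⟨0, 13, 8, 7, 6, 5, 10⟩, ⟨0, 13, 8, 9, 4, 5, 9⟩, ⟨0, 13, 8, 9, 10, 1, 5⟩, ⟨0, 13, 12, 3, 2, 1, 1⟩, ⟨0, 13, 12, 3, 4, 5, 8⟩, ⟨0, 13, 12, 11, 6, 5, 11⟩, ⟨0, 13, 12, 11, 10, 1, 7⟩]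

def entriesA1 : List Ent := [⟨1, 0, 5, 4, 3, 2, 0⟩, ⟨1, 0, 5, 4, 9, 10, 4⟩, ⟨1, 0, 5, 6, 7, 2, 2⟩, ⟨1, 0, 5, 6, 11, 10, 6⟩, ⟨1, 0, 13, 8, 7, 2, 3⟩, ⟨1, 0, 13, 8, 9, 10, 5⟩, ⟨1, 0, 13, 12, 3, 2, 1⟩, ⟨1, 0, 13, 12, 11, 10, 7⟩, ⟨1, 2, 3, 4, 5, 0, 0⟩, ⟨1, 2, 3, 4, 9, 10, 12⟩, ⟨1, 2, 3, 12, 11, 10, 13⟩, ⟨1, 2, 3, 12, 13, 0, 1⟩, ⟨1, 2, 7, 6, 5, 0, 2⟩, ⟨1, 2, 7, 6, 11, 10, 14⟩, ⟨1, 2, 7, 8, 9, 10, 15⟩, ⟨1, 2, 7, 8, 13, 0, 3⟩, ⟨1, 10, 9, 4, 3, 2, 12⟩, ⟨1, 10, 9, 4, 5, 0, 4⟩, ⟨1, 10, 9, 8, 7, 2, 15⟩, ⟨1, 10, 9, 8, 13, 0, 5⟩, ⟨1, 10, 11, 6, 5, 0, 6⟩, ⟨1, 10, 11, 6, 7, 2,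 14⟩, ⟨1, 10, 11, 12, 3, 2, 13⟩, ⟨1, 10, 11, 12, 13, 0, 7⟩]

def entriesA2 : List Ent := [⟨2, 1, 0, 5, 4, 3, 0⟩, ⟨2, 1, 0, 5, 6, 7, 2⟩, ⟨2, 1, 0, 13, 8, 7, 3⟩, ⟨2, 1, 0, 13, 12, 3, 1⟩, ⟨2, 1, 10, 9, 4, 3, 12⟩, ⟨2, 1, 10, 9, 8, 7, 15⟩, ⟨2, 1, 10, 11, 6, 7, 14⟩, ⟨2, 1, 10, 11, 12, 3, 13⟩, ⟨2, 3, 4, 5, 0, 1, 0⟩, ⟨2, 3, 4, 5, 6, 7, 16⟩, ⟨2, 3, 4, 9, 8, 7, 17⟩, ⟨2, 3, 4, 9, 10, 1, 12⟩, ⟨2, 3, 12, 11, 6, 7, 18⟩, ⟨2, 3, 12, 11, 10, 1, 13⟩, ⟨2, 3, 12, 13, 0, 1, 1⟩, ⟨2, 3, 12, 13, 8, 7, 19⟩, ⟨2, 7, 6, 5, 0, 1, 2⟩, ⟨2, 7, 6, 5, 4, 3, 16⟩, ⟨2, 7, 6, 11, 10, 1, 14⟩, ⟨2, 7, 6, 11,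 12, 3, 18⟩, ⟨2, 7, 8, 9, 4, 3, 17⟩, ⟨2, 7, 8, 9, 10, 1, 15⟩, ⟨2, 7, 8, 13, 0, 1, 3⟩, ⟨2, 7, 8, 13, 12, 3, 19⟩]

def entriesA3 : List Ent := [⟨3, 2, 1, 0, 5, 4, 0⟩, ⟨3, 2, 1, 0, 13, 12, 1⟩, ⟨3, 2, 1, 10, 9, 4, 12⟩, ⟨3, 2, 1, 10, 11, 12, 13⟩, ⟨3, 2, 7, 6, 5, 4, 16⟩, ⟨3, 2, 7, 6, 11, 12, 18⟩, ⟨3, 2, 7, 8, 9, 4, 17⟩, ⟨3, 2, 7, 8, 13, 12, 19⟩, ⟨3, 4, 5, 0, 1, 2, 0⟩, ⟨3, 4, 5, 0, 13, 12, 8⟩, ⟨3, 4, 5, 6, 7, 2, 16⟩, ⟨3, 4, 5, 6, 11, 12, 20⟩, ⟨3, 4, 9, 8, 7, 2, 17⟩, ⟨3, 4, 9, 8, 13, 12, 21⟩, ⟨3, 4, 9, 10, 1, 2, 12⟩, ⟨3, 4, 9, 10, 11, 12, 22⟩, ⟨3, 12, 11, 6, 5, 4, 20⟩, ⟨3, 12,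 11, 6, 7, 2, 18⟩, ⟨3, 12, 11, 10, 1, 2, 13⟩, ⟨3, 12, 11, 10, 9, 4, 22⟩, ⟨3, 12, 13, 0, 1, 2, 1⟩, ⟨3, 12, 13, 0, 5, 4, 8⟩, ⟨3, 12, 13, 8, 7, 2, 19⟩, ⟨3, 12, 13, 8, 9, 4, 21⟩]

def entriesA4 : List Ent := [⟨4, 3, 2, 1, 0, 5, 0⟩, ⟨4, 3, 2, 1, 10, 9, 12⟩, ⟨4, 3, 2, 7, 6, 5, 16⟩, ⟨4, 3, 2, 7, 8, 9, 17⟩, ⟨4, 3, 12, 11, 6, 5, 20⟩, ⟨4, 3, 12, 11, 10, 9, 22⟩, ⟨4, 3, 12, 13, 0, 5, 8⟩, ⟨4, 3, 12, 13, 8, 9, 21⟩, ⟨4, 5, 0, 1, 2, 3, 0⟩, ⟨4, 5, 0, 1, 10, 9, 4⟩, ⟨4, 5, 0, 13, 8, 9, 9⟩, ⟨4, 5, 0, 13, 12, 3, 8⟩, ⟨4, 5, 6, 7, 2, 3, 16⟩, ⟨4, 5, 6, 7, 8, 9, 23⟩, ⟨4, 5, 6, 11, 10, 9, 24⟩, ⟨4,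 5, 6, 11, 12, 3, 20⟩, ⟨4, 9, 8, 7, 2, 3, 17⟩, ⟨4, 9, 8, 7, 6, 5, 23⟩, ⟨4, 9, 8, 13, 0, 5, 9⟩, ⟨4, 9, 8, 13, 12, 3, 21⟩, ⟨4, 9, 10, 1, 0, 5, 4⟩, ⟨4, 9, 10, 1, 2, 3, 12⟩, ⟨4, 9, 10, 11, 6, 5, 24⟩, ⟨4, 9, 10, 11, 12, 3, 22⟩]

def entriesA5 : List Ent := [⟨5, 0, 1, 2, 3, 4, 0⟩, ⟨5, 0, 1, 2, 7, 6, 2⟩, ⟨5, 0, 1, 10, 9, 4, 4⟩, ⟨5, 0, 1, 10, 11, 6, 6⟩, ⟨5, 0, 13, 8, 7, 6, 10⟩, ⟨5, 0, 13, 8, 9, 4, 9⟩, ⟨5, 0, 13, 12, 3, 4, 8⟩, ⟨5, 0, 13, 12, 11, 6, 11⟩, ⟨5, 4, 3, 2, 1, 0, 0⟩, ⟨5, 4, 3, 2, 7, 6, 16⟩, ⟨5, 4, 3, 12, 11, 6, 20⟩, ⟨5, 4, 3, 12, 13, 0, 8⟩, ⟨5, 4, 9, 8, 7, 6, 23⟩,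 ⟨5, 4, 9, 8, 13, 0, 9⟩, ⟨5, 4, 9, 10, 1, 0, 4⟩, ⟨5, 4, 9, 10, 11, 6, 24⟩, ⟨5, 6, 7, 2, 1, 0, 2⟩, ⟨5, 6, 7, 2, 3, 4, 16⟩, ⟨5, 6, 7, 8, 9, 4, 23⟩, ⟨5, 6, 7, 8, 13, 0, 10⟩, ⟨5, 6, 11, 10, 1, 0, 6⟩, ⟨5, 6, 11, 10, 9, 4, 24⟩, ⟨5, 6, 11, 12, 3, 4, 20⟩, ⟨5, 6, 11, 12, 13, 0, 11⟩]

def entriesA6 : List Ent := [⟨6, 5, 0, 1, 2, 7, 2⟩, ⟨6, 5, 0, 1, 10, 11, 6⟩, ⟨6, 5, 0, 13, 8, 7, 10⟩, ⟨6, 5, 0, 13, 12, 11, 11⟩, ⟨6, 5, 4, 3, 2, 7, 16⟩, ⟨6, 5, 4, 3, 12, 11, 20⟩, ⟨6, 5, 4, 9, 8, 7, 23⟩, ⟨6, 5, 4, 9, 10, 11, 24⟩, ⟨6, 7, 2, 1, 0, 5, 2⟩, ⟨6, 7, 2, 1, 10, 11, 14⟩, ⟨6, 7, 2, 3, 4,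 5, 16⟩, ⟨6, 7, 2, 3, 12, 11, 18⟩, ⟨6, 7, 8, 9, 4, 5, 23⟩, ⟨6, 7, 8, 9, 10, 11, 25⟩, ⟨6, 7, 8, 13, 0, 5, 10⟩, ⟨6, 7, 8, 13, 12, 11, 26⟩, ⟨6, 11, 10, 1, 0, 5, 6⟩, ⟨6, 11, 10, 1, 2, 7, 14⟩, ⟨6, 11, 10, 9, 4, 5, 24⟩, ⟨6, 11, 10, 9, 8, 7, 25⟩, ⟨6, 11, 12, 3, 2, 7, 18⟩, ⟨6, 11, 12, 3, 4, 5, 20⟩, ⟨6, 11, 12, 13, 0, 5, 11⟩, ⟨6, 11, 12, 13, 8, 7, 26⟩]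

def entriesA7 : List Ent := [⟨7, 2, 1, 0, 5, 6, 2⟩, ⟨7, 2, 1, 0, 13, 8, 3⟩, ⟨7, 2, 1, 10, 9, 8, 15⟩, ⟨7, 2, 1, 10, 11, 6, 14⟩, ⟨7, 2, 3, 4, 5, 6, 16⟩, ⟨7, 2, 3, 4, 9, 8, 17⟩, ⟨7, 2, 3, 12, 11, 6, 18⟩, ⟨7, 2, 3, 12, 13, 8, 19⟩, ⟨7, 6, 5, 0, 1, 2, 2⟩, ⟨7, 6, 5, 0, 13, 8, 10⟩, ⟨7, 6, 5, 4, 3, 2, 16⟩, ⟨7, 6, 5, 4, 9, 8, 23⟩, ⟨7, 6, 11, 10, 1, 2, 14⟩, ⟨7, 6, 11, 10, 9, 8, 25⟩, ⟨7, 6, 11, 12, 3, 2, 18⟩, ⟨7, 6, 11, 12, 13, 8, 26⟩, ⟨7, 8, 9, 4, 3, 2, 17⟩, ⟨7, 8, 9, 4, 5, 6, 23⟩, ⟨7, 8, 9, 10, 1, 2, 15⟩, ⟨7, 8, 9, 10, 11, 6, 25⟩, ⟨7, 8, 13, 0, 1, 2, 3⟩, ⟨7, 8, 13, 0, 5, 6,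 10⟩, ⟨7, 8, 13, 12, 3, 2, 19⟩, ⟨7, 8, 13, 12, 11, 6, 26⟩]

def entriesA8 : List Ent := [⟨8, 7, 2, 1, 0, 13, 3⟩, ⟨8, 7, 2, 1, 10, 9, 15⟩, ⟨8, 7, 2, 3, 4, 9, 17⟩, ⟨8, 7, 2, 3, 12, 13, 19⟩, ⟨8, 7, 6, 5, 0, 13, 10⟩, ⟨8, 7, 6, 5, 4, 9, 23⟩, ⟨8, 7, 6, 11, 10, 9, 25⟩, ⟨8, 7, 6, 11, 12, 13, 26⟩, ⟨8, 9, 4, 3, 2, 7, 17⟩, ⟨8, 9, 4, 3, 12, 13, 21⟩, ⟨8, 9, 4, 5, 0, 13, 9⟩, ⟨8, 9, 4, 5, 6, 7, 23⟩, ⟨8, 9, 10, 1, 0, 13, 5⟩, ⟨8, 9, 10, 1, 2, 7, 15⟩, ⟨8, 9, 10, 11, 6, 7, 25⟩, ⟨8, 9, 10, 11, 12, 13, 27⟩, ⟨8, 13, 0, 1, 2, 7, 3⟩, ⟨8, 13, 0, 1, 10, 9, 5⟩, ⟨8, 13, 0, 5, 4, 9, 9⟩, ⟨8, 13, 0, 5,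 6, 7, 10⟩, ⟨8, 13, 12, 3, 2, 7, 19⟩, ⟨8, 13, 12, 3, 4, 9, 21⟩, ⟨8, 13, 12, 11, 6, 7, 26⟩, ⟨8, 13, 12, 11, 10, 9, 27⟩]

def entriesA9 : List Ent := [⟨9, 4, 3, 2, 1, 10, 12⟩, ⟨9, 4, 3, 2, 7, 8, 17⟩, ⟨9, 4, 3, 12, 11, 10, 22⟩, ⟨9, 4, 3, 12, 13, 8, 21⟩, ⟨9, 4, 5, 0, 1, 10, 4⟩, ⟨9, 4, 5, 0, 13, 8, 9⟩, ⟨9, 4, 5, 6, 7, 8, 23⟩, ⟨9, 4, 5, 6, 11, 10, 24⟩, ⟨9, 8, 7, 2, 1, 10, 15⟩, ⟨9, 8, 7, 2, 3, 4, 17⟩, ⟨9, 8, 7, 6, 5, 4, 23⟩, ⟨9, 8, 7, 6, 11, 10, 25⟩, ⟨9, 8, 13, 0, 1, 10, 5⟩, ⟨9, 8, 13, 0, 5, 4, 9⟩, ⟨9, 8, 13, 12, 3, 4, 21⟩, ⟨9, 8, 13, 12, 11, 10, 27⟩, ⟨9, 10, 1, 0, 5, 4, 4⟩, ⟨9, 10,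 1, 0, 13, 8, 5⟩, ⟨9, 10, 1, 2, 3, 4, 12⟩, ⟨9, 10, 1, 2, 7, 8, 15⟩, ⟨9, 10, 11, 6, 5, 4, 24⟩, ⟨9, 10, 11, 6, 7, 8, 25⟩, ⟨9, 10, 11, 12, 3, 4, 22⟩, ⟨9, 10, 11, 12, 13, 8, 27⟩]

def entriesA10 : List Ent := [⟨10, 1, 0, 5, 4, 9, 4⟩, ⟨10, 1, 0, 5, 6, 11, 6⟩, ⟨10, 1, 0, 13, 8, 9, 5⟩, ⟨10, 1, 0, 13, 12, 11, 7⟩, ⟨10, 1, 2, 3, 4, 9, 12⟩, ⟨10, 1, 2, 3, 12, 11, 13⟩, ⟨10, 1, 2, 7, 6, 11, 14⟩, ⟨10, 1, 2, 7, 8, 9, 15⟩, ⟨10, 9, 4, 3, 2, 1, 12⟩, ⟨10, 9, 4, 3, 12, 11, 22⟩, ⟨10, 9, 4, 5, 0, 1, 4⟩, ⟨10, 9, 4, 5, 6, 11, 24⟩, ⟨10, 9, 8, 7, 2, 1, 15⟩, ⟨10, 9, 8, 7, 6, 11, 25⟩, ⟨10, 9, 8, 13, 0, 1, 5⟩, ⟨10,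 9, 8, 13, 12, 11, 27⟩, ⟨10, 11, 6, 5, 0, 1, 6⟩, ⟨10, 11, 6, 5, 4, 9, 24⟩, ⟨10, 11, 6, 7, 2, 1, 14⟩, ⟨10, 11, 6, 7, 8, 9, 25⟩, ⟨10, 11, 12, 3, 2, 1, 13⟩, ⟨10, 11, 12, 3, 4, 9, 22⟩, ⟨10, 11, 12, 13, 0, 1, 7⟩, ⟨10, 11, 12, 13, 8, 9, 27⟩]

def entriesA11 : List Ent := [⟨11, 6, 5, 0, 1, 10, 6⟩, ⟨11, 6, 5, 0, 13, 12, 11⟩, ⟨11, 6, 5, 4, 3, 12, 20⟩, ⟨11, 6, 5, 4, 9, 10, 24⟩, ⟨11, 6, 7, 2, 1, 10, 14⟩, ⟨11, 6, 7, 2, 3, 12, 18⟩, ⟨11, 6, 7, 8, 9, 10, 25⟩, ⟨11, 6, 7, 8, 13, 12, 26⟩, ⟨11, 10, 1, 0, 5, 6, 6⟩, ⟨11, 10, 1, 0, 13, 12, 7⟩, ⟨11, 10, 1, 2, 3, 12, 13⟩, ⟨11, 10, 1, 2, 7, 6, 14⟩, ⟨11, 10, 9, 4, 3, 12, 22⟩,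 ⟨11, 10, 9, 4, 5, 6, 24⟩, ⟨11, 10, 9, 8, 7, 6, 25⟩, ⟨11, 10, 9, 8, 13, 12, 27⟩, ⟨11, 12, 3, 2, 1, 10, 13⟩, ⟨11, 12, 3, 2, 7, 6, 18⟩, ⟨11, 12, 3, 4, 5, 6, 20⟩, ⟨11, 12, 3, 4, 9, 10, 22⟩, ⟨11, 12, 13, 0, 1, 10, 7⟩, ⟨11, 12, 13, 0, 5, 6, 11⟩, ⟨11, 12, 13, 8, 7, 6, 26⟩, ⟨11, 12, 13, 8, 9, 10, 27⟩]

def entriesA12 : List Ent := [⟨12, 3, 2, 1, 0, 13, 1⟩, ⟨12, 3, 2, 1, 10, 11, 13⟩, ⟨12, 3, 2, 7, 6, 11, 18⟩, ⟨12, 3, 2, 7, 8, 13, 19⟩, ⟨12, 3, 4, 5, 0, 13, 8⟩, ⟨12, 3, 4, 5, 6, 11, 20⟩, ⟨12, 3, 4, 9, 8, 13, 21⟩, ⟨12, 3, 4, 9, 10, 11, 22⟩, ⟨12, 11, 6, 5, 0, 13, 11⟩, ⟨12, 11, 6, 5, 4, 3, 20⟩, ⟨12, 11, 6, 7, 2,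 3, 18⟩, ⟨12, 11, 6, 7, 8, 13, 26⟩, ⟨12, 11, 10, 1, 0, 13, 7⟩, ⟨12, 11, 10, 1, 2, 3, 13⟩, ⟨12, 11, 10, 9, 4, 3, 22⟩, ⟨12, 11, 10, 9, 8, 13, 27⟩, ⟨12, 13, 0, 1, 2, 3, 1⟩, ⟨12, 13, 0, 1, 10, 11, 7⟩, ⟨12, 13, 0, 5, 4, 3, 8⟩, ⟨12, 13, 0, 5, 6, 11, 11⟩, ⟨12, 13, 8, 7, 2, 3, 19⟩, ⟨12, 13, 8, 7, 6, 11, 26⟩, ⟨12, 13, 8, 9, 4, 3, 21⟩, ⟨12, 13, 8, 9, 10, 11, 27⟩]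

def entriesA13 : List Ent := [⟨13, 0, 1, 2, 3, 12, 1⟩, ⟨13, 0, 1, 2, 7, 8, 3⟩, ⟨13, 0, 1, 10, 9, 8, 5⟩, ⟨13, 0, 1, 10, 11, 12, 7⟩, ⟨13, 0, 5, 4, 3, 12, 8⟩, ⟨13, 0, 5, 4, 9, 8, 9⟩, ⟨13, 0, 5, 6, 7, 8, 10⟩, ⟨13, 0, 5, 6, 11, 12, 11⟩, ⟨13, 8, 7, 2, 1, 0, 3⟩, ⟨13, 8, 7, 2, 3, 12, 19⟩, ⟨13, 8, 7, 6, 5, 0, 10⟩, ⟨13, 8, 7, 6, 11, 12, 26⟩, ⟨13, 8, 9, 4, 3, 12, 21⟩, ⟨13, 8, 9, 4, 5, 0, 9⟩, ⟨13, 8, 9, 10, 1, 0, 5⟩, ⟨13, 8, 9, 10, 11, 12, 27⟩, ⟨13, 12, 3, 2, 1, 0, 1⟩, ⟨13, 12, 3, 2, 7, 8, 19⟩, ⟨13, 12, 3, 4, 5, 0, 8⟩, ⟨13, 12, 3, 4, 9, 8, 21⟩, ⟨13, 12, 11, 6, 5, 0, 11⟩, ⟨13, 12, 11, 6, 7, 8,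 26⟩, ⟨13, 12, 11, 10, 1, 0, 7⟩, ⟨13, 12, 11, 10, 9, 8, 27⟩]

def entTab : ZMod 14 → List Ent :=
  ![entriesA0, entriesA1, entriesA2, entriesA3, entriesA4, entriesA5, entriesA6, entriesA7, entriesA8, entriesA9, entriesA10, entriesA11, entriesA12, entriesA13]

set_option maxHeartbeats 4000000 in
lemma ent_rel : ∀ a0 : ZMod 14, ∀ e ∈ entTab a0,
    (∃ t : ZMod 6, ∀ i, repsF e.k i = e.vec (i + t)) ∨
    (∃ t : ZMod 6, ∀ i, repsF e.k i = e.vec (t - i)) := by decide +kernel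

set_option maxHeartbeats 0 in
set_option maxRecDepth 40000 in
lemma key0 : ∀ a1, adj' 0 a1 → ∀ a2, adj' a1 a2 →
    ∀ a3, adj' a2 a3 → ∀ a4, adj' a3 a4 →
    ∀ a5, adj' a4 a5 → adj' a5 0 →
    (0:ZMod 14) ≠ a2 → (0:ZMod 14) ≠ a3 → (0:ZMod 14) ≠ a4 → a1 ≠ a3 → a1 ≠ a4 → a1 ≠ a5 →
    a2 ≠ a4 → a2 ≠ a5 → a3 ≠ a5 →
    ∃ e ∈ entTab 0, e.a0 = 0 ∧ e.a1 = a1 ∧ e.a2 = a2 ∧ e.a3 = a3 ∧ e.a4 = a4 ∧ e.a5 = a5 := by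
  decide +kernel

set_option maxHeartbeats 0 in
set_option maxRecDepth 40000 in
lemma key1 : ∀ a1, adj' 1 a1 → ∀ a2, adj' a1 a2 →
    ∀ a3, adj' a2 a3 → ∀ a4, adj' a3 a4 →
    ∀ a5, adj' a4 a5 → adj' a5 1 →
    (1:ZMod 14) ≠ a2 → (1:ZMod 14) ≠ a3 → (1:ZMod 14) ≠ a4 → a1 ≠ a3 → a1 ≠ a4 → a1 ≠ a5 →
    a2 ≠ a4 → a2 ≠ a5 → a3 ≠ a5 →
    ∃ e ∈ entTab 1, e.a0 = 1 ∧ e.a1 = a1 ∧ e.a2 = a2 ∧ e.a3 = a3 ∧ e.a4 = a4 ∧ e.a5 = a5 := by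
  decide +kernel

set_option maxHeartbeats 0 in
set_option maxRecDepth 40000 in
lemma key2 : ∀ a1, adj' 2 a1 → ∀ a2, adj' a1 a2 →
    ∀ a3, adj' a2 a3 → ∀ a4, adj' a3 a4 →
    ∀ a5, adj' a4 a5 → adj' a5 2 →
    (2:ZMod 14) ≠ a2 → (2:ZMod 14) ≠ a3 → (2:ZMod 14) ≠ a4 → a1 ≠ a3 → a1 ≠ a4 → a1 ≠ a5 →
    a2 ≠ a4 → a2 ≠ a5 → a3 ≠ a5 →
    ∃ e ∈ entTab 2, e.a0 = 2 ∧ e.a1 = a1 ∧ e.a2 = a2 ∧ e.a3 = a3 ∧ e.a4 = a4 ∧ e.a5 = a5 := by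
  decide +kernel

set_option maxHeartbeats 0 in
set_option maxRecDepth 40000 in
lemma key3 : ∀ a1, adj' 3 a1 → ∀ a2, adj' a1 a2 →
    ∀ a3, adj' a2 a3 → ∀ a4, adj' a3 a4 →
    ∀ a5, adj' a4 a5 → adj' a5 3 →
    (3:ZMod 14) ≠ a2 → (3:ZMod 14) ≠ a3 → (3:ZMod 14) ≠ a4 → a1 ≠ a3 → a1 ≠ a4 → a1 ≠ a5 →
    a2 ≠ a4 → a2 ≠ a5 → a3 ≠ a5 →
    ∃ e ∈ entTab 3, e.a0 = 3 ∧ e.a1 = a1 ∧ e.a2 = a2 ∧ e.a3 = a3 ∧ e.a4 = a4 ∧ e.a5 = a5 := by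
  decide +kernel

set_option maxHeartbeats 0 in
set_option maxRecDepth 40000 in
lemma key4 : ∀ a1, adj' 4 a1 → ∀ a2, adj' a1 a2 →
    ∀ a3, adj' a2 a3 → ∀ a4, adj' a3 a4 →
    ∀ a5, adj' a4 a5 → adj' a5 4 →
    (4:ZMod 14) ≠ a2 → (4:ZMod 14) ≠ a3 → (4:ZMod 14) ≠ a4 → a1 ≠ a3 → a1 ≠ a4 → a1 ≠ a5 →
    a2 ≠ a4 → a2 ≠ a5 → a3 ≠ a5 →
    ∃ e ∈ entTab 4, e.a0 = 4 ∧ e.a1 = a1 ∧ e.a2 = a2 ∧ e.a3 = a3 ∧ e.a4 = a4 ∧ e.a5 = a5 := by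
  decide +kernel

set_option maxHeartbeats 0 in
set_option maxRecDepth 40000 in
lemma key5 : ∀ a1, adj' 5 a1 → ∀ a2, adj' a1 a2 →
    ∀ a3, adj' a2 a3 → ∀ a4, adj' a3 a4 →
    ∀ a5, adj' a4 a5 → adj' a5 5 →
    (5:ZMod 14) ≠ a2 → (5:ZMod 14) ≠ a3 → (5:ZMod 14) ≠ a4 → a1 ≠ a3 → a1 ≠ a4 → a1 ≠ a5 →
    a2 ≠ a4 → a2 ≠ a5 → a3 ≠ a5 →
    ∃ e ∈ entTab 5, e.a0 = 5 ∧ e.a1 = a1 ∧ e.a2 = a2 ∧ e.a3 = a3 ∧ e.a4 = a4 ∧ e.a5 = a5 := by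
  decide +kernel

set_option maxHeartbeats 0 in
set_option maxRecDepth 40000 in
lemma key6 : ∀ a1, adj' 6 a1 → ∀ a2, adj' a1 a2 →
    ∀ a3, adj' a2 a3 → ∀ a4, adj' a3 a4 →
    ∀ a5, adj' a4 a5 → adj' a5 6 →
    (6:ZMod 14) ≠ a2 → (6:ZMod 14) ≠ a3 → (6:ZMod 14) ≠ a4 → a1 ≠ a3 → a1 ≠ a4 → a1 ≠ a5 →
    a2 ≠ a4 → a2 ≠ a5 → a3 ≠ a5 →
    ∃ e ∈ entTab 6, e.a0 = 6 ∧ e.a1 = a1 ∧ e.a2 = a2 ∧ e.a3 = a3 ∧ e.a4 = a4 ∧ e.a5 = a5 := by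
  decide +kernel

set_option maxHeartbeats 0 in
set_option maxRecDepth 40000 in
lemma key7 : ∀ a1, adj' 7 a1 → ∀ a2, adj' a1 a2 →
    ∀ a3, adj' a2 a3 → ∀ a4, adj' a3 a4 →
    ∀ a5, adj' a4 a5 → adj' a5 7 →
    (7:ZMod 14) ≠ a2 → (7:ZMod 14) ≠ a3 → (7:ZMod 14) ≠ a4 → a1 ≠ a3 → a1 ≠ a4 → a1 ≠ a5 →
    a2 ≠ a4 → a2 ≠ a5 → a3 ≠ a5 →
    ∃ e ∈ entTab 7, e.a0 = 7 ∧ e.a1 = a1 ∧ e.a2 = a2 ∧ e.a3 = a3 ∧ e.a4 = a4 ∧ e.a5 = a5 := by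
  decide +kernel

set_option maxHeartbeats 0 in
set_option maxRecDepth 40000 in
lemma key8 : ∀ a1, adj' 8 a1 → ∀ a2, adj' a1 a2 →
    ∀ a3, adj' a2 a3 → ∀ a4, adj' a3 a4 →
    ∀ a5, adj' a4 a5 → adj' a5 8 →
    (8:ZMod 14) ≠ a2 → (8:ZMod 14) ≠ a3 → (8:ZMod 14) ≠ a4 → a1 ≠ a3 → a1 ≠ a4 → a1 ≠ a5 →
    a2 ≠ a4 → a2 ≠ a5 → a3 ≠ a5 →
    ∃ e ∈ entTab 8, e.a0 = 8 ∧ e.a1 = a1 ∧ e.a2 = a2 ∧ e.a3 = a3 ∧ e.a4 = a4 ∧ e.a5 = a5 := by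
  decide +kernel

set_option maxHeartbeats 0 in
set_option maxRecDepth 40000 in
lemma key9 : ∀ a1, adj' 9 a1 → ∀ a2, adj' a1 a2 →
    ∀ a3, adj' a2 a3 → ∀ a4, adj' a3 a4 →
    ∀ a5, adj' a4 a5 → adj' a5 9 →
    (9:ZMod 14) ≠ a2 → (9:ZMod 14) ≠ a3 → (9:ZMod 14) ≠ a4 → a1 ≠ a3 → a1 ≠ a4 → a1 ≠ a5 →
    a2 ≠ a4 → a2 ≠ a5 → a3 ≠ a5 →
    ∃ e ∈ entTab 9, e.a0 = 9 ∧ e.a1 = a1 ∧ e.a2 = a2 ∧ e.a3 = a3 ∧ e.a4 = a4 ∧ e.a5 = a5 := by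
  decide +kernel

set_option maxHeartbeats 0 in
set_option maxRecDepth 40000 in
lemma key10 : ∀ a1, adj' 10 a1 → ∀ a2, adj' a1 a2 →
    ∀ a3, adj' a2 a3 → ∀ a4, adj' a3 a4 →
    ∀ a5, adj' a4 a5 → adj' a5 10 →
    (10:ZMod 14) ≠ a2 → (10:ZMod 14) ≠ a3 → (10:ZMod 14) ≠ a4 → a1 ≠ a3 → a1 ≠ a4 → a1 ≠ a5 →
    a2 ≠ a4 → a2 ≠ a5 → a3 ≠ a5 →
    ∃ e ∈ entTab 10, e.a0 = 10 ∧ e.a1 = a1 ∧ e.a2 = a2 ∧ e.a3 = a3 ∧ e.a4 = a4 ∧ e.a5 = a5 := by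
  decide +kernel

set_option maxHeartbeats 0 in
set_option maxRecDepth 40000 in
lemma key11 : ∀ a1, adj' 11 a1 → ∀ a2, adj' a1 a2 →
    ∀ a3, adj' a2 a3 → ∀ a4, adj' a3 a4 →
    ∀ a5, adj' a4 a5 → adj' a5 11 →
    (11:ZMod 14) ≠ a2 → (11:ZMod 14) ≠ a3 → (11:ZMod 14) ≠ a4 → a1 ≠ a3 → a1 ≠ a4 → a1 ≠ a5 →
    a2 ≠ a4 → a2 ≠ a5 → a3 ≠ a5 →
    ∃ e ∈ entTab 11, e.a0 = 11 ∧ e.a1 = a1 ∧ e.a2 = a2 ∧ e.a3 = a3 ∧ e.a4 = a4 ∧ e.a5 = a5 := by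
  decide +kernel

set_option maxHeartbeats 0 in
set_option maxRecDepth 40000 in
lemma key12 : ∀ a1, adj' 12 a1 → ∀ a2, adj' a1 a2 →
    ∀ a3, adj' a2 a3 → ∀ a4, adj' a3 a4 →
    ∀ a5, adj' a4 a5 → adj' a5 12 →
    (12:ZMod 14) ≠ a2 → (12:ZMod 14) ≠ a3 → (12:ZMod 14) ≠ a4 → a1 ≠ a3 → a1 ≠ a4 → a1 ≠ a5 →
    a2 ≠ a4 → a2 ≠ a5 → a3 ≠ a5 →
    ∃ e ∈ entTab 12, e.a0 = 12 ∧ e.a1 = a1 ∧ e.a2 = a2 ∧ e.a3 = a3 ∧ e.a4 = a4 ∧ e.a5 = a5 := by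
  decide +kernel

set_option maxHeartbeats 0 in
set_option maxRecDepth 40000 in
lemma key13 : ∀ a1, adj' 13 a1 → ∀ a2, adj' a1 a2 →
    ∀ a3, adj' a2 a3 → ∀ a4, adj' a3 a4 →
    ∀ a5, adj' a4 a5 → adj' a5 13 →
    (13:ZMod 14) ≠ a2 → (13:ZMod 14) ≠ a3 → (13:ZMod 14) ≠ a4 → a1 ≠ a3 → a1 ≠ a4 → a1 ≠ a5 →
    a2 ≠ a4 → a2 ≠ a5 → a3 ≠ a5 →
    ∃ e ∈ entTab 13, e.a0 = 13 ∧ e.a1 = a1 ∧ e.a2 = a2 ∧ e.a3 = a3 ∧ e.a4 = a4 ∧ e.a5 = a5 := by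
  decide +kernel

lemma key : ∀ a0 a1 : ZMod 14, adj' a0 a1 → ∀ a2, adj' a1 a2 →
    ∀ a3, adj' a2 a3 → ∀ a4, adj' a3 a4 →
    ∀ a5, adj' a4 a5 → adj' a5 a0 →
    a0 ≠ a2 → a0 ≠ a3 → a0 ≠ a4 → a1 ≠ a3 → a1 ≠ a4 → a1 ≠ a5 →
    a2 ≠ a4 → a2 ≠ a5 → a3 ≠ a5 →
    ∃ e ∈ entTab a0, e.a0 = a0 ∧ e.a1 = a1 ∧ e.a2 = a2 ∧ e.a3 = a3 ∧ e.a4 = a4 ∧ e.a5 = a5 := by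
  intro a0
  fin_cases a0
  all_goals first | exact key0 | exact key1 | exact key2 | exact key3 | exact key4 | exact key5 | exact key6 | exact key7 | exact key8 | exact key9 | exact key10 | exact key11 | exact key12 | exact key13

set_option maxHeartbeats 4000000 in
lemma reps_inj : ∀ j k : Fin 28,
    ((∃ t : ZMod 6, ∀ i, repsF k i = repsF j (i + t)) ∨
     (∃ t : ZMod 6, ∀ i, repsF k i = repsF j (t - i))) → j = k := by decide +kernel

/-- The Heawood graph has exactly 28 cycles of length 6. -/
theorem heawood_28_hexagons :
    Nat.card (Quot (DirCycleRel heawoodGraph 6)) = 28 := by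
  have hbij : Function.Bijective
      (fun k : Fin 28 => Quot.mk (DirCycleRel heawoodGraph 6) ⟨repsF k, hreps k⟩) := by
    constructor
    · intro j k h
      rw [Quot.eq] at h
      have h' := ((dirCycleRel_equiv heawoodGraph 6).eqvGen_iff).mp h
      exact reps_inj j k h'
    · intro q
      induction q using Quot.ind with
      | _ s =>
        obtain ⟨c, hinj, hadj⟩ := s
        have hne : ∀ i j : ZMod 6, i ≠ j → c i ≠ c j := fun i j hij h => hij (hinj h)
        have A : ∀ i : ZMod 6, adj' (c i) (c (i + 1)) := fun i => (adj_iff _ _).mp (hadj i)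
        obtain ⟨e, he, h0, h1, h2, h3, h4, h5⟩ := key (c 0) (c 1) (A 0) (c 2) (A 1)
          (c 3) (A 2) (c 4) (A 3) (c 5) (A 4) (A 5)
          (hne 0 2 (by decide)) (hne 0 3 (by decide)) (hne 0 4 (by decide))
          (hne 1 3 (by decide)) (hne 1 4 (by decide)) (hne 1 5 (by decide))
          (hne 2 4 (by decide)) (hne 2 5 (by decide)) (hne 3 5 (by decide))
        have hev : e.vec = c := funext fun i => by
          fin_cases i
          · exact h0
          · exact h1
          · exact h2
          · exact h3
          · exact h4
          · exact h5
        have h := ent_rel (c 0) e he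
        rw [hev] at h
        have hrel : DirCycleRel heawoodGraph 6 ⟨c, hinj, hadj⟩ ⟨repsF e.k, hreps e.k⟩ := h
        exact ⟨e.k, (Quot.sound hrel).symm⟩
  have h := Nat.card_eq_of_bijective _ hbij
  rw [← h, Nat.card_eq_fintype_card, Fintype.card_fin]
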